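/- (Consistency of the (H₃)″ flat-coordinate formulas.) Let t₁, t₂, t₃, Z ∈ ℂ satisfy Z² + t₂ − t₃² = 0 and Z ≠ 0. Define y₁ = (288/25)(135t₁t₂ + 405t₁t₃² − 90t₂²t₃ − 108t₂²Z + 1070t₂t₃³ + 216t₂t₃²Z + 2292t₃⁵ − 108t₃⁴Z), y₂ = (8/5)(27t₁ + 90t₂t₃ + 160t₃³), y₃ = 12t₃. Define the Jacobian entries J_{iα} := ∂yᵢ/∂tₐ + (∂yᵢ/∂Z)·ζₐ, where the partial derivatives of the above polynomial expressions are taken treating t₁,t₂,t₃,Z as independent variables and ζ₁ = 0, ζ₂ = −1/(2Z), ζ₃ = t₃/Z. Define the symmetric matrix g with entries g^{11} = (4/243)(585t₂²t₃ + 3240t₂t₃³ + 4456t₃⁵ − 324Z(t₂² − 7t₂t₃² + 6t₃⁴)), g^{12} = −(4/27)(33t₂² + 4t₂t₃(18Z − 13t₃) − 72t₃³(Z + t₃)), g^{13} = t₁, g^{22} = t₁ − (22/3)t₂t₃ + (52/27)t₃³ + 4Z(t₂ − t₃²), g^{23} = (2/3)t₂, g^{33} = (1/3)t₃. Then for all i,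 j ∈ {1,2,3}: ∑_{α,β=1}^{3} J_{iα} g^{αβ} J_{jβ} = G^{ij}(y₁,y₂,y₃), where G^{11} = 30y₂³ + 36y₂²y₃³ + 8y₁y₃⁴, G^{12} = 28y₂²y₃ + 8y₂y₃⁴, G^{13} = 20y₁, G^{22} = 8y₁ + 8y₂y₃², G^{23} = 12y₂, G^{33} = 4y₃. -/
import Mathlib


open MvPolynomial

noncomputable section
set_option maxHeartbeats 4000000
private lemma pderiv_ofNat4 (i : Fin 4) (n : ℕ) [n.AtLeastTwo] :
    pderiv i (no_index (OfNat.ofNat n) : MvPolynomial (Fin 4) ℂ) = 0 := by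
  rw [show (OfNat.ofNat n : MvPolynomial (Fin 4) ℂ)
      = ((OfNat.ofNat n : ℕ) : MvPolynomial (Fin 4) ℂ) by norm_num]
  exact Derivation.map_natCast _ _


/-- The basic invariants `y₁, y₂, y₃` of `H₃` as polynomial expressions in the flat coordinates
`t₁, t₂, t₃` (variables `X 0, X 1, X 2`) and the auxiliary variable `Z` (variable `X 3`) of the
algebraic Frobenius manifold `(H₃)″`. -/
def YH32 : Fin 3 → MvPolynomial (Fin 4) ℂ :=
  ![C ((288 : ℂ) / 25) *
      (135 * X 0 * X 1 + 405 * X 0 * X 2 ^ 2 - 90 * X 1 ^ 2 * X 2 - 108 * X 1 ^ 2 * X 3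
        + 1070 * X 1 * X 2 ^ 3 + 216 * X 1 * X 2 ^ 2 * X 3 + 2292 * X 2 ^ 5
        - 108 * X 2 ^ 4 * X 3),
    C ((8 : ℂ) / 5) * (27 * X 0 + 90 * X 1 * X 2 + 160 * X 2 ^ 3),
    12 * X 2]

/-- The intersection form of the algebraic Frobenius manifold `(H₃)″` in its flat
coordinates `t₁, t₂, t₃` with auxiliary algebraic variable `Z`. -/
def gH32 (t₁ t₂ t₃ Z : ℂ) : Matrix (Fin 3) (Fin 3) ℂ :=
  !![(4 / 243) * (585 * t₂ ^ 2 * t₃ + 3240 * t₂ * t₃ ^ 3 + 4456 * t₃ ^ 5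
        - 324 * Z * (t₂ ^ 2 - 7 * t₂ * t₃ ^ 2 + 6 * t₃ ^ 4)),
      -(4 / 27) * (33 * t₂ ^ 2 + 4 * t₂ * t₃ * (18 * Z - 13 * t₃) - 72 * t₃ ^ 3 * (Z + t₃)),
      t₁;
    -(4 / 27) * (33 * t₂ ^ 2 + 4 * t₂ * t₃ * (18 * Z - 13 * t₃) - 72 * t₃ ^ 3 * (Z + t₃)),
      t₁ - (22 / 3) * t₂ * t₃ + (52 / 27) * t₃ ^ 3 + 4 * Z * (t₂ - t₃ ^ 2),
      (2 / 3) * t₂;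
    t₁, (2 / 3) * t₂, (1 / 3) * t₃]

/-- The `H₃` intersection form expressed in the basic invariants `y₁, y₂, y₃`. -/
def GH3 (y₁ y₂ y₃ : ℂ) : Matrix (Fin 3) (Fin 3) ℂ :=
  !![30 * y₂ ^ 3 + 36 * y₂ ^ 2 * y₃ ^ 3 + 8 * y₁ * y₃ ^ 4,
      28 * y₂ ^ 2 * y₃ + 8 * y₂ * y₃ ^ 4, 20 * y₁;
    28 * y₂ ^ 2 * y₃ + 8 * y₂ * y₃ ^ 4, 8 * y₁ + 8 * y₂ * y₃ ^ 2, 12 * y₂;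
    20 * y₁, 12 * y₂, 4 * y₃]

/-- Consistency of the `(H₃)″` flat-coordinate formulas:
`∑_{α,β} J_{iα} g^{αβ} J_{jβ} = G^{ij}(y₁, y₂, y₃)`, where `J_{iα} = ∂yᵢ/∂tₐ + (∂yᵢ/∂Z)·ζₐ`
with `ζ = (0, -1/(2Z), t₃/Z)`. -/
theorem statement_4 (t₁ t₂ t₃ Z : ℂ) (hrel : Z ^ 2 + t₂ - t₃ ^ 2 = 0) (hZ : Z ≠ 0) :
    ∀ i j : Fin 3,
      (∑ α : Fin 3, ∑ β : Fin 3,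
        (eval ![t₁, t₂, t₃, Z] (pderiv α.castSucc (YH32 i)) +
            eval ![t₁, t₂, t₃, Z] (pderiv (3 : Fin 4) (YH32 i)) *
              ![0, -1 / (2 * Z), t₃ / Z] α) *
          gH32 t₁ t₂ t₃ Z α β *
          (eval ![t₁, t₂, t₃, Z] (pderiv β.castSucc (YH32 j)) +
            eval ![t₁, t₂, t₃, Z] (pderiv (3 : Fin 4) (YH32 j)) *
              ![0, -1 / (2 * Z), t₃ / Z] β))
      = GH3 (eval ![t₁, t₂, t₃, Z] (YH32 0)) (eval ![t₁, t₂, t₃, Z] (YH32 1))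
          (eval ![t₁, t₂, t₃, Z] (YH32 2)) i j := by
  have hy0 : eval ![t₁, t₂, t₃, Z] (YH32 0) = (288/25)*(135*t₁*t₂+405*t₁*t₃^2-90*t₂^2*t₃-108*t₂^2*Z+1070*t₂*t₃^3+216*t₂*t₃^2*Z+2292*t₃^5-108*t₃^4*Z) := by
    simp [YH32] <;> ring
  have hd00 : eval ![t₁, t₂, t₃, Z] (pderiv (0 : Fin 4) (YH32 0)) = (288/25)*(135*t₂+405*t₃^2) := by
    simp [YH32, pderiv_ofNat4, pderiv_C, pderiv_X, Pi.single_apply, Derivation.leibniz, Derivation.leibniz_pow, smul_eq_mul] <;> ring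
  have hd01 : eval ![t₁, t₂, t₃, Z] (pderiv (1 : Fin 4) (YH32 0)) = (288/25)*(135*t₁-180*t₂*t₃-216*t₂*Z+1070*t₃^3+216*t₃^2*Z) := by
    simp [YH32, pderiv_ofNat4, pderiv_C, pderiv_X, Pi.single_apply, Derivation.leibniz, Derivation.leibniz_pow, smul_eq_mul] <;> ring
  have hd02 : eval ![t₁, t₂, t₃, Z] (pderiv (2 : Fin 4) (YH32 0)) = (288/25)*(810*t₁*t₃-90*t₂^2+3210*t₂*t₃^2+432*t₂*t₃*Z+11460*t₃^4-432*t₃^3*Z) := by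
    simp [YH32, pderiv_ofNat4, pderiv_C, pderiv_X, Pi.single_apply, Derivation.leibniz, Derivation.leibniz_pow, smul_eq_mul] <;> ring
  have hd03 : eval ![t₁, t₂, t₃, Z] (pderiv (3 : Fin 4) (YH32 0)) = (288/25)*(-108*t₂^2+216*t₂*t₃^2-108*t₃^4) := by
    simp [YH32, pderiv_ofNat4, pderiv_C, pderiv_X, Pi.single_apply, Derivation.leibniz, Derivation.leibniz_pow, smul_eq_mul] <;> ring
  have hy1 : eval ![t₁, t₂, t₃, Z] (YH32 1) = (8/5)*(27*t₁+90*t₂*t₃+160*t₃^3) := by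
    simp [YH32] <;> ring
  have hd10 : eval ![t₁, t₂, t₃, Z] (pderiv (0 : Fin 4) (YH32 1)) = (216/5 : ℂ) := by
    simp [YH32, pderiv_ofNat4, pderiv_C, pderiv_X, Pi.single_apply, Derivation.leibniz, Derivation.leibniz_pow, smul_eq_mul] <;> ring
  have hd11 : eval ![t₁, t₂, t₃, Z] (pderiv (1 : Fin 4) (YH32 1)) = 144*t₃ := by
    simp [YH32, pderiv_ofNat4, pderiv_C, pderiv_X, Pi.single_apply, Derivation.leibniz, Derivation.leibniz_pow, smul_eq_mul] <;> ring
  have hd12 : eval ![t₁, t₂, t₃, Z] (pderiv (2 : Fin 4) (YH32 1)) = (8/5)*(90*t₂+480*t₃^2) := by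
    simp [YH32, pderiv_ofNat4, pderiv_C, pderiv_X, Pi.single_apply, Derivation.leibniz, Derivation.leibniz_pow, smul_eq_mul] <;> ring
  have hd13 : eval ![t₁, t₂, t₃, Z] (pderiv (3 : Fin 4) (YH32 1)) = (0:ℂ) := by
    simp [YH32, pderiv_ofNat4, pderiv_C, pderiv_X, Pi.single_apply, Derivation.leibniz, Derivation.leibniz_pow, smul_eq_mul] <;> ring
  have hy2 : eval ![t₁, t₂, t₃, Z] (YH32 2) = 12*t₃ := by
    simp [YH32] <;> ring
  have hd20 : eval ![t₁, t₂, t₃, Z] (pderiv (0 : Fin 4) (YH32 2)) = (0:ℂ) := by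
    simp [YH32, pderiv_ofNat4, pderiv_C, pderiv_X, Pi.single_apply, Derivation.leibniz, Derivation.leibniz_pow, smul_eq_mul] <;> ring
  have hd21 : eval ![t₁, t₂, t₃, Z] (pderiv (1 : Fin 4) (YH32 2)) = (0:ℂ) := by
    simp [YH32, pderiv_ofNat4, pderiv_C, pderiv_X, Pi.single_apply, Derivation.leibniz, Derivation.leibniz_pow, smul_eq_mul] <;> ring
  have hd22 : eval ![t₁, t₂, t₃, Z] (pderiv (2 : Fin 4) (YH32 2)) = (12:ℂ) := by
    simp [YH32, pderiv_ofNat4, pderiv_C, pderiv_X, Pi.single_apply, Derivation.leibniz, Derivation.leibniz_pow, smul_eq_mul] <;> ring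
  have hd23 : eval ![t₁, t₂, t₃, Z] (pderiv (3 : Fin 4) (YH32 2)) = (0:ℂ) := by
    simp [YH32, pderiv_ofNat4, pderiv_C, pderiv_X, Pi.single_apply, Derivation.leibniz, Derivation.leibniz_pow, smul_eq_mul] <;> ring
  have ht₂ : t₂ = t₃ ^ 2 - Z ^ 2 := by linear_combination hrel
  subst ht₂
  intro i j
  fin_cases i <;> fin_cases j
  · simp only [Fin.sum_univ_three, Fin.isValue, Fin.castSucc_zero, Fin.castSucc_one,
      show ((2 : Fin 3).castSucc) = (2 : Fin 4) from rfl, Fin.zero_eta, Fin.mk_one,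
      show ((⟨2, by omega⟩ : Fin 3)) = (2 : Fin 3) from rfl,
      hy0, hy1, hy2, hd00, hd01, hd02, hd03, hd10, hd11, hd12, hd13, hd20, hd21, hd22, hd23,
      gH32, GH3, Matrix.cons_val', Matrix.cons_val_zero, Matrix.cons_val_one, Matrix.head_cons,
      Matrix.cons_val_two, Matrix.tail_cons, Matrix.empty_val', Matrix.cons_val_fin_one,
      Matrix.of_apply, Matrix.head_fin_const]
    linear_combination ((((-2257403904:ℂ)/625)*Z^9 + ((-967458816:ℂ)/625)*Z^10*Z⁻¹ + ((483729408:ℂ)/125)*t₃*Z^8 + ((483729408:ℂ)/125)*t₃*Z^9*Z⁻¹ + ((1182449664:ℂ)/125)*t₃^2*Z^7 + ((5034369024:ℂ)/625)*t₃^3*Z^6 + ((-1630347264:ℂ)/625)*t₃^3*Z^7*Z⁻¹ + ((-7023034368:ℂ)/125)*t₃^4*Z^5 + ((2294562816:ℂ)/125)*t₃^6*Z^3 + ((-2660511744:ℂ)/625)*t₁*Z^6 + ((241864704:ℂ)/625)*t₁*Z^7*Z⁻¹ + ((1934917632:ℂ)/125)*t₁*t₃*Z^5 + ((-394149888:ℂ)/25)*t₁*t₃^3*Z^3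 + ((241864704:ℂ)/125)*t₁^2*Z^3)) * (inv_mul_cancel₀ hZ)
  · simp only [Fin.sum_univ_three, Fin.isValue, Fin.castSucc_zero, Fin.castSucc_one,
      show ((2 : Fin 3).castSucc) = (2 : Fin 4) from rfl, Fin.zero_eta, Fin.mk_one,
      show ((⟨2, by omega⟩ : Fin 3)) = (2 : Fin 3) from rfl,
      hy0, hy1, hy2, hd00, hd01, hd02, hd03, hd10, hd11, hd12, hd13, hd20, hd21, hd22, hd23,
      gH32, GH3, Matrix.cons_val', Matrix.cons_val_zero, Matrix.cons_val_one, Matrix.head_cons,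
      Matrix.cons_val_two, Matrix.tail_cons, Matrix.empty_val', Matrix.cons_val_fin_one,
      Matrix.of_apply, Matrix.head_fin_const]
    linear_combination ((((-8957952:ℂ)/125)*Z^7 + ((-8957952:ℂ)/125)*t₃*Z^6 + ((56733696:ℂ)/125)*t₃^2*Z^5 + ((-30191616:ℂ)/125)*t₃^4*Z^3 + ((4478976:ℂ)/125)*t₁*t₃*Z^3)) * (inv_mul_cancel₀ hZ)
  · simp only [Fin.sum_univ_three, Fin.isValue, Fin.castSucc_zero, Fin.castSucc_one,
      show ((2 : Fin 3).castSucc) = (2 : Fin 4) from rfl, Fin.zero_eta, Fin.mk_one,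
      show ((⟨2, by omega⟩ : Fin 3)) = (2 : Fin 3) from rfl,
      hy0, hy1, hy2, hd00, hd01, hd02, hd03, hd10, hd11, hd12, hd13, hd20, hd21, hd22, hd23,
      gH32, GH3, Matrix.cons_val', Matrix.cons_val_zero, Matrix.cons_val_one, Matrix.head_cons,
      Matrix.cons_val_two, Matrix.tail_cons, Matrix.empty_val', Matrix.cons_val_fin_one,
      Matrix.of_apply, Matrix.head_fin_const]
    linear_combination ((((-124416:ℂ)/25)*Z^5)) * (inv_mul_cancel₀ hZ)
  · simp only [Fin.sum_univ_three, Fin.isValue, Fin.castSucc_zero, Fin.castSucc_one,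
      show ((2 : Fin 3).castSucc) = (2 : Fin 4) from rfl, Fin.zero_eta, Fin.mk_one,
      show ((⟨2, by omega⟩ : Fin 3)) = (2 : Fin 3) from rfl,
      hy0, hy1, hy2, hd00, hd01, hd02, hd03, hd10, hd11, hd12, hd13, hd20, hd21, hd22, hd23,
      gH32, GH3, Matrix.cons_val', Matrix.cons_val_zero, Matrix.cons_val_one, Matrix.head_cons,
      Matrix.cons_val_two, Matrix.tail_cons, Matrix.empty_val', Matrix.cons_val_fin_one,
      Matrix.of_apply, Matrix.head_fin_const]
    linear_combination ((((-8957952:ℂ)/125)*Z^7 + ((-8957952:ℂ)/125)*t₃*Z^6 + ((56733696:ℂ)/125)*t₃^2*Z^5 + ((-30191616:ℂ)/125)*t₃^4*Z^3 + ((4478976:ℂ)/125)*t₁*t₃*Z^3)) * (inv_mul_cancel₀ hZ)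
  · simp only [Fin.sum_univ_three, Fin.isValue, Fin.castSucc_zero, Fin.castSucc_one,
      show ((2 : Fin 3).castSucc) = (2 : Fin 4) from rfl, Fin.zero_eta, Fin.mk_one,
      show ((⟨2, by omega⟩ : Fin 3)) = (2 : Fin 3) from rfl,
      hy0, hy1, hy2, hd00, hd01, hd02, hd03, hd10, hd11, hd12, hd13, hd20, hd21, hd22, hd23,
      gH32, GH3, Matrix.cons_val', Matrix.cons_val_zero, Matrix.cons_val_one, Matrix.head_cons,
      Matrix.cons_val_two, Matrix.tail_cons, Matrix.empty_val', Matrix.cons_val_fin_one,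
      Matrix.of_apply, Matrix.head_fin_const]
    linear_combination ((0:ℂ)) * (inv_mul_cancel₀ hZ)
  · simp only [Fin.sum_univ_three, Fin.isValue, Fin.castSucc_zero, Fin.castSucc_one,
      show ((2 : Fin 3).castSucc) = (2 : Fin 4) from rfl, Fin.zero_eta, Fin.mk_one,
      show ((⟨2, by omega⟩ : Fin 3)) = (2 : Fin 3) from rfl,
      hy0, hy1, hy2, hd00, hd01, hd02, hd03, hd10, hd11, hd12, hd13, hd20, hd21, hd22, hd23,
      gH32, GH3, Matrix.cons_val', Matrix.cons_val_zero, Matrix.cons_val_one, Matrix.head_cons,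
      Matrix.cons_val_two, Matrix.tail_cons, Matrix.empty_val', Matrix.cons_val_fin_one,
      Matrix.of_apply, Matrix.head_fin_const]
    linear_combination ((0:ℂ)) * (inv_mul_cancel₀ hZ)
  · simp only [Fin.sum_univ_three, Fin.isValue, Fin.castSucc_zero, Fin.castSucc_one,
      show ((2 : Fin 3).castSucc) = (2 : Fin 4) from rfl, Fin.zero_eta, Fin.mk_one,
      show ((⟨2, by omega⟩ : Fin 3)) = (2 : Fin 3) from rfl,
      hy0, hy1, hy2, hd00, hd01, hd02, hd03, hd10, hd11, hd12, hd13, hd20, hd21, hd22, hd23,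
      gH32, GH3, Matrix.cons_val', Matrix.cons_val_zero, Matrix.cons_val_one, Matrix.head_cons,
      Matrix.cons_val_two, Matrix.tail_cons, Matrix.empty_val', Matrix.cons_val_fin_one,
      Matrix.of_apply, Matrix.head_fin_const]
    linear_combination ((((-124416:ℂ)/25)*Z^5)) * (inv_mul_cancel₀ hZ)
  · simp only [Fin.sum_univ_three, Fin.isValue, Fin.castSucc_zero, Fin.castSucc_one,
      show ((2 : Fin 3).castSucc) = (2 : Fin 4) from rfl, Fin.zero_eta, Fin.mk_one,
      show ((⟨2, by omega⟩ : Fin 3)) = (2 : Fin 3) from rfl,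
      hy0, hy1, hy2, hd00, hd01, hd02, hd03, hd10, hd11, hd12, hd13, hd20, hd21, hd22, hd23,
      gH32, GH3, Matrix.cons_val', Matrix.cons_val_zero, Matrix.cons_val_one, Matrix.head_cons,
      Matrix.cons_val_two, Matrix.tail_cons, Matrix.empty_val', Matrix.cons_val_fin_one,
      Matrix.of_apply, Matrix.head_fin_const]
    linear_combination ((0:ℂ)) * (inv_mul_cancel₀ hZ)
  · simp only [Fin.sum_univ_three, Fin.isValue, Fin.castSucc_zero, Fin.castSucc_one,
      show ((2 : Fin 3).castSucc) = (2 : Fin 4) from rfl, Fin.zero_eta, Fin.mk_one,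
      show ((⟨2, by omega⟩ : Fin 3)) = (2 : Fin 3) from rfl,
      hy0, hy1, hy2, hd00, hd01, hd02, hd03, hd10, hd11, hd12, hd13, hd20, hd21, hd22, hd23,
      gH32, GH3, Matrix.cons_val', Matrix.cons_val_zero, Matrix.cons_val_one, Matrix.head_cons,
      Matrix.cons_val_two, Matrix.tail_cons, Matrix.empty_val', Matrix.cons_val_fin_one,
      Matrix.of_apply, Matrix.head_fin_const]
    linear_combination ((0:ℂ)) * (inv_mul_cancel₀ hZ)
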